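/- Factoring upper bound at the boundary direction: let K ⊆ ℂ^d be compact and circled, and let α(j) be multi-indices with |α(j)| → ∞ and α(j)/|α(j)| → (1, 0, …, 0). Write α(j) = (α₁(j), α'(j)) and ε_j := |α'(j)|/|α(j)| → 0. Then limsup_{j→∞} τ_{K,α(j)} ≤ max_{z ∈ K} |z₁|, where τ_{K,α} := inf{ (sup_K |p|)^{1/|α|} : p ∈ M_α }. -/

import Mathlib

open MvPolynomial Filter

/-- Total degree (length) of a multi-index. -/
def degF {d : ℕ} (α : Fin d →₀ ℕ) : ℕ := α.sum fun _ n => n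

/-- Sup norm of a polynomial on a set. -/
noncomputable def supNorm {d : ℕ} (K : Set (Fin d → ℂ)) (p : MvPolynomial (Fin d) ℂ) : ℝ :=
  sSup ((fun z => ‖MvPolynomial.eval z p‖) '' K)

/-- The monic class `M_α` with respect to a strict order `prec` on multi-indices. -/
def MonicClass {d : ℕ} (prec : (Fin d →₀ ℕ) → (Fin d →₀ ℕ) → Prop)
    (α : Fin d →₀ ℕ) (p : MvPolynomial (Fin d) ℂ) : Prop :=
  MvPolynomial.coeff α p = 1 ∧ ∀ β ∈ p.support, β ≠ α → prec β α

/-- The directional Chebyshev constant `τ_{K,α}`. -/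
noncomputable def tau {d : ℕ} (K : Set (Fin d → ℂ))
    (prec : (Fin d →₀ ℕ) → (Fin d →₀ ℕ) → Prop) (α : Fin d →₀ ℕ) : ℝ :=
  sInf ((fun p => supNorm K p ^ ((degF α : ℝ)⁻¹)) '' {p | MonicClass prec α p})

/-- Graded lexicographic-type order with `z₁ ≺ z₂ ≺ ⋯ ≺ z_d`:
`β ≺ α` iff `|β| < |α|`, or the degrees agree and at the first index where they
differ `β` has the *larger* exponent (so `z₁^n` is smallest in its degree class). -/
def gLex {d : ℕ} (β α : Fin d →₀ ℕ) : Prop :=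
  degF β < degF α ∨ (degF β = degF α ∧ Finsupp.Lex (· < ·) (· < ·) α β)


lemma degF_eq_sum {d : ℕ} (α : Fin d →₀ ℕ) : degF α = ∑ i, α i :=
  Finsupp.sum_fintype _ _ fun _ => rfl

lemma supNorm_nonneg {d : ℕ} (K : Set (Fin d → ℂ)) (p : MvPolynomial (Fin d) ℂ) :
    0 ≤ supNorm K p :=
  Real.sSup_nonneg (by rintro x ⟨z, _, rfl⟩; positivity)

lemma monicClass_monomial {d : ℕ} (prec : (Fin d →₀ ℕ) → (Fin d →₀ ℕ) → Prop)
    (α : Fin d →₀ ℕ) : MonicClass prec α (monomial α (1 : ℂ)) := by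
  constructor
  · simp [coeff_monomial]
  · intro β hβ hne
    rw [support_monomial, if_neg one_ne_zero] at hβ
    simp only [Finset.mem_singleton] at hβ
    exact absurd hβ hne

lemma tau_nonneg {d : ℕ} (K : Set (Fin d → ℂ))
    (prec : (Fin d →₀ ℕ) → (Fin d →₀ ℕ) → Prop) (α : Fin d →₀ ℕ) :
    0 ≤ tau K prec α :=
  Real.sInf_nonneg (by rintro x ⟨p, _, rfl⟩; exact Real.rpow_nonneg (supNorm_nonneg _ _) _)

lemma tau_le_monomial {d : ℕ} (K : Set (Fin d → ℂ))
    (prec : (Fin d →₀ ℕ) → (Fin d →₀ ℕ) → Prop) (α : Fin d →₀ ℕ) :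
    tau K prec α ≤ supNorm K (monomial α (1 : ℂ)) ^ ((degF α : ℝ)⁻¹) := by
  apply csInf_le
  · exact ⟨0, by rintro x ⟨p, _, rfl⟩; exact Real.rpow_nonneg (supNorm_nonneg _ _) _⟩
  · exact ⟨_, monicClass_monomial prec α, rfl⟩

/-- for a compact circled `K` and multi-indices `α(j)` with
`|α(j)| → ∞` and `α(j)/|α(j)| → (1,0,…,0)`,
`limsup_j τ_{K,α(j)} ≤ max_{z∈K} |z₁|`. -/
theorem limsup_cheb_first_direction {d : ℕ} (K : Set (Fin (d + 1) → ℂ))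
    (hK : IsCompact K) (hne : K.Nonempty)
    (hcirc : ∀ z ∈ K, ∀ φ : ℝ, (fun i => Complex.exp (φ * Complex.I) * z i) ∈ K)
    (α : ℕ → Fin (d + 1) →₀ ℕ)
    (hdeg : Tendsto (fun j => degF (α j)) atTop atTop)
    (hdir : Tendsto (fun j (i : Fin (d + 1)) => ((α j i : ℝ) / (degF (α j) : ℝ)))
      atTop (nhds fun i => if i = 0 then (1 : ℝ) else 0)) :
    limsup (fun j => tau K gLex (α j)) atTop ≤ sSup ((fun z => ‖z 0‖) '' K) := by

  obtain ⟨C, hC⟩ := isBounded_iff_forall_norm_le.mp hK.isBounded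
  set R : ℝ := max C 1 with hRdef
  have hR1 : (1 : ℝ) ≤ R := le_max_right _ _
  have hR0 : (0 : ℝ) < R := lt_of_lt_of_le one_pos hR1
  have hzR : ∀ z ∈ K, ∀ i, ‖z i‖ ≤ R := fun z hz i =>
    ((norm_le_pi_norm z i).trans (hC z hz)).trans (le_max_left _ _)
  set M : ℝ := sSup ((fun z => ‖z 0‖) '' K) with hMdef
  have hM0 : 0 ≤ M := Real.sSup_nonneg (by rintro x ⟨z, _, rfl⟩; positivity)
  have hzM : ∀ z ∈ K, ‖z 0‖ ≤ M := fun z hz =>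
    le_csSup ⟨R, by rintro x ⟨w, hw, rfl⟩; exact hzR w hw 0⟩ ⟨z, hz, rfl⟩
  set a : ℕ → ℝ := fun j => (α j 0 : ℝ) / (degF (α j) : ℝ) with ha
  have hat : Tendsto a atTop (nhds 1) := by
    have h := tendsto_pi_nhds.mp hdir 0
    simpa using h
  set g : ℕ → ℝ := fun j => M ^ (a j) * R ^ (1 - a j) with hg
  have key : ∀ᶠ j in atTop, tau K gLex (α j) ≤ g j := by
    filter_upwards [hdeg.eventually_ge_atTop 1] with j hj
    set β := α j with hβ
    set D := degF β with hD
    set A := β 0 with hA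
    set S := ∑ i ∈ Finset.univ.erase 0, β i with hS
    have hAS : A + S = D := by
      rw [hD, degF_eq_sum]
      exact Finset.add_sum_erase _ _ (Finset.mem_univ 0)
    have hDpos : (0 : ℝ) < (D : ℝ) := by exact_mod_cast hj
    have hbound : supNorm K (monomial β (1 : ℂ)) ≤ M ^ A * R ^ S := by
      apply Real.sSup_le
      · rintro x ⟨z, hz, rfl⟩
        dsimp only
        have he : ‖eval z (monomial β (1 : ℂ))‖ = ∏ i, ‖z i‖ ^ β i := by
          rw [eval_monomial, one_mul,
            Finsupp.prod_fintype _ _ (fun i => pow_zero (z i)), norm_prod]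
          simp [norm_pow]
        rw [he]
        have hsplit : ∏ i, ‖z i‖ ^ β i
            = ‖z 0‖ ^ A * ∏ i ∈ Finset.univ.erase 0, ‖z i‖ ^ β i :=
          (Finset.mul_prod_erase _ _ (Finset.mem_univ 0)).symm
        rw [hsplit]
        have h1 : ‖z 0‖ ^ A ≤ M ^ A := pow_le_pow_left₀ (norm_nonneg _) (hzM z hz) A
        have h2 : ∏ i ∈ Finset.univ.erase 0, ‖z i‖ ^ β i ≤ R ^ S := by
          calc ∏ i ∈ Finset.univ.erase 0, ‖z i‖ ^ β i
              ≤ ∏ i ∈ Finset.univ.erase 0, R ^ β i :=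
                Finset.prod_le_prod (fun i _ => by positivity)
                  (fun i _ => pow_le_pow_left₀ (norm_nonneg _) (hzR z hz i) _)
            _ = R ^ S := Finset.prod_pow_eq_pow_sum _ _ _
        exact mul_le_mul h1 h2 (Finset.prod_nonneg fun i _ => by positivity)
          (pow_nonneg hM0 A)
      · positivity
    have hrw : (M ^ A * R ^ S : ℝ) ^ ((D : ℝ)⁻¹) = g j := by
      rw [← Real.rpow_natCast M A, ← Real.rpow_natCast R S,
        Real.mul_rpow (Real.rpow_nonneg hM0 _) (Real.rpow_nonneg hR0.le _),
        ← Real.rpow_mul hM0, ← Real.rpow_mul hR0.le]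
      have hSA : (S : ℝ) = (D : ℝ) - (A : ℝ) := by
        have : (A : ℝ) + (S : ℝ) = (D : ℝ) := by exact_mod_cast hAS
        linarith
      have e1 : (A : ℝ) * (D : ℝ)⁻¹ = a j := by
        rw [ha]; simp only [← hβ, ← hD, ← hA, div_eq_mul_inv]
      have e2 : (S : ℝ) * (D : ℝ)⁻¹ = 1 - a j := by
        rw [hSA, ha]; simp only [← hβ, ← hD, ← hA]
        rw [sub_mul, mul_inv_cancel₀ hDpos.ne', div_eq_mul_inv]
      rw [e1, e2]
    calc tau K gLex β ≤ supNorm K (monomial β (1 : ℂ)) ^ ((D : ℝ)⁻¹) :=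
          tau_le_monomial K gLex β
      _ ≤ (M ^ A * R ^ S : ℝ) ^ ((D : ℝ)⁻¹) :=
          Real.rpow_le_rpow (supNorm_nonneg _ _) hbound (by positivity)
      _ = g j := hrw
  have hgt : Tendsto g atTop (nhds M) := by
    rcases eq_or_lt_of_le hM0 with h0 | hpos
    · have hev : ∀ᶠ j in atTop, g j = 0 := by
        filter_upwards [hat.eventually (eventually_ge_nhds (by norm_num : (1:ℝ)/2 < 1))] with j hja
        rw [hg]
        simp only
        rw [← h0, Real.zero_rpow (by linarith), zero_mul]
      rw [← h0]
      have hev' : g =ᶠ[atTop] (fun _ => (0 : ℝ)) := hev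
      exact Tendsto.congr' hev'.symm tendsto_const_nhds
    · have h1 : Tendsto (fun j => M ^ a j) atTop (nhds (M ^ (1 : ℝ))) :=
        tendsto_const_nhds.rpow hat (Or.inl hpos.ne')
      have h2 : Tendsto (fun j => R ^ (1 - a j)) atTop (nhds (R ^ (0 : ℝ))) := by
        have : Tendsto (fun j => 1 - a j) atTop (nhds 0) := by
          have h3 : Tendsto (fun j => (1 : ℝ) - a j) atTop (nhds (1 - 1)) :=
            Tendsto.sub tendsto_const_nhds hat
          simpa using h3
        exact tendsto_const_nhds.rpow this (Or.inl hR0.ne')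
      have := h1.mul h2
      simpa using this
  have hb : IsBoundedUnder (· ≤ ·) atTop g := hgt.isBoundedUnder_le
  have hcb : IsCoboundedUnder (· ≤ ·) atTop (fun j => tau K gLex (α j)) :=
    IsBoundedUnder.isCoboundedUnder_le
      (isBoundedUnder_of ⟨0, fun j => tau_nonneg K gLex (α j)⟩)
  calc limsup (fun j => tau K gLex (α j)) atTop ≤ limsup g atTop :=
        limsup_le_limsup key hcb hb
    _ = M := hgt.limsup_eq
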